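/- Let f : ℝ≥0 → ℝ≥0 be non-increasing with non-decreasing work, let C > 0, set γ := inf { q | f(q) ≤ C } and suppose f(γ) ≤ C. If S is a finite set with nonnegative speeds s_i (i ∈ S) whose sum σ(S) satisfies σ(S) ≥ (1/2) * γ * f(γ) / C, then f(σ(S)) ≤ 2 * C. -/

import Mathlib

open scoped NNReal

theorem stmt_2 {ι : Type*} (f : ℝ≥0 → ℝ≥0) (hf : Antitone f)
    (hwork : Monotone fun s => s * f s)
    (C : ℝ≥0) (hC : 0 < C)
    (γ : ℝ≥0) (hγdef : γ = sInf {q : ℝ≥0 | f q ≤ C}) (hγ : f γ ≤ C)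
    (S : Finset ι) (s : ι → ℝ≥0)
    (hσ : (1 / 2) * γ * f γ / C ≤ ∑ i ∈ S, s i) :
    f (∑ i ∈ S, s i) ≤ 2 * C := by
  set σ := ∑ i ∈ S, s i with hσdef
  by_cases hle : γ ≤ σ
  · calc f σ ≤ f γ := hf hle
      _ ≤ C := hγ
      _ ≤ 2 * C := le_mul_of_one_le_left zero_le one_le_two
  · push_neg at hle
    have hγpos : 0 < γ := lt_of_le_of_lt zero_le hle
    have hfγpos : 0 < f γ := by
      by_contra h
      push_neg at h
      have hfγ0 : f γ = 0 := le_antisymm h zero_le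
      have hq : (γ / 2) * f (γ / 2) ≤ γ * f γ :=
        hwork (half_le_self zero_le)
      rw [hfγ0, mul_zero, nonpos_iff_eq_zero, mul_eq_zero] at hq
      have hq2 : γ / 2 ≠ 0 := by positivity
      have hfq : f (γ / 2) = 0 := hq.resolve_left hq2
      have hmem : γ / 2 ∈ {q : ℝ≥0 | f q ≤ C} := by simp [hfq]
      have h1 : γ ≤ γ / 2 := by
        conv_lhs => rw [hγdef]
        exact csInf_le (OrderBot.bddBelow _) hmem
      exact absurd h1 (not_le.2 (half_lt_self hγpos))
    have hσpos : 0 < σ := by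
      refine lt_of_lt_of_le ?_ hσ
      positivity
    have hR : (1/2 : ℝ) * γ * f γ / C ≤ σ := by exact_mod_cast hσ
    have hwR : (σ : ℝ) * f σ ≤ γ * f γ := by exact_mod_cast hwork hle.le
    have hσposR : (0 : ℝ) < σ := hσpos
    have hCR : (0 : ℝ) < C := hC
    have goalR : (f σ : ℝ) ≤ 2 * C := by
      rw [div_le_iff₀ hCR] at hR
      nlinarith [hσposR, hCR]
    exact_mod_cast goalR
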